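/- arXiv:1606.04924 — 3 statements merged into one kernel-verified Lean document; each statement's English description precedes it below -/
import Mathlib

section
/- Let d ≥ 1 and α ∈ [0,1). Then there exists r₀ > 0 such that for every r ≥ r₀ the family (B_k^r)_{k ∈ ℤ^d∖{0}} is an admissible covering of ℝ^d: ⋃_{k ∈ ℤ^d∖{0}} B_k^r = ℝ^d, and sup_{k ∈ ℤ^d∖{0}} #{l ∈ ℤ^d∖{0} : B_l^r ∩ B_k^r ≠ ∅} < ∞. -/
open MeasureTheory
open scoped ENNReal

/-- The integer lattice point `k ∈ ℤ^d` viewed as an element of `ℝ^d`. -/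
noncomputable def intVec {d : ℕ} (k : Fin d → ℤ) : EuclideanSpace ℝ (Fin d) :=
  (EuclideanSpace.equiv (Fin d) ℝ).symm (fun i => (k i : ℝ))

/-- The ball `B_k^r = {ξ ∈ ℝ^d : |ξ - |k|^{α₀} k| < r |k|^{α₀}}` with `α₀ = α/(1-α)`, a member of
the standard `α`-covering of the frequency space `ℝ^d`. -/
noncomputable def alphaBall (d : ℕ) (α r : ℝ) (k : Fin d → ℤ) :
    Set (EuclideanSpace ℝ (Fin d)) :=
  Metric.ball ((‖intVec k‖ ^ (α / (1 - α))) • intVec k) (r * ‖intVec k‖ ^ (α / (1 - α)))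


lemma coord_le_norm {d : ℕ} (x : EuclideanSpace ℝ (Fin d)) (i : Fin d) : |x i| ≤ ‖x‖ := by
  rw [EuclideanSpace.norm_eq, ← Real.sqrt_sq_eq_abs]
  apply Real.sqrt_le_sqrt
  have := Finset.single_le_sum (f := fun j => ‖x j‖^2) (fun j _ => sq_nonneg _) (Finset.mem_univ i)
  simpa [Real.norm_eq_abs, sq_abs] using this

lemma norm_le_of_coord {d : ℕ} (x : EuclideanSpace ℝ (Fin d)) (c : ℝ) (hc : 0 ≤ c)
    (h : ∀ i, |x i| ≤ c) : ‖x‖ ≤ Real.sqrt d * c := by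
  rw [EuclideanSpace.norm_eq]
  have h1 : ∑ i, ‖x i‖^2 ≤ (d : ℝ) * c^2 := by
    calc ∑ i, ‖x i‖^2 ≤ ∑ _i : Fin d, c^2 := by
          apply Finset.sum_le_sum; intro i _
          rw [Real.norm_eq_abs]
          exact pow_le_pow_left₀ (abs_nonneg _) (h i) 2
      _ = (d : ℝ) * c^2 := by simp [Finset.card_univ]
  calc Real.sqrt (∑ i, ‖x i‖^2) ≤ Real.sqrt ((d:ℝ) * c^2) := Real.sqrt_le_sqrt h1
    _ = Real.sqrt d * c := by
        rw [Real.sqrt_mul (Nat.cast_nonneg d), Real.sqrt_sq hc]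

lemma bern_rpow {β m a : ℝ} (hβ : 0 ≤ β) (hm : 0 ≤ m) (hma : m ≤ a) :
    a ^ (β+1) - m ^ (β+1) ≤ (1+β) * a ^ β * (a - m) := by
  rcases eq_or_lt_of_le (hm.trans hma) with ha | ha
  · subst ha
    have hm0 : m = 0 := le_antisymm hma hm
    simp [hm0]
  rcases eq_or_lt_of_le hm with hm0 | hm0
  · rw [← hm0, Real.zero_rpow (by positivity : β + 1 ≠ 0)]
    have h1 : a ^ (β+1) = a ^ β * a := Real.rpow_add_one (ne_of_gt ha) β
    nlinarith [mul_nonneg (mul_nonneg hβ (Real.rpow_nonneg ha.le β)) ha.le]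
  -- 0 < m ≤ a
  have h0 : (0:ℝ) ≤ m / a := by positivity
  have key := one_add_mul_self_le_rpow_one_add (s := m/a - 1)
    (by linarith) (p := 1+β) (by linarith)
  have hsimp : (1 + (m/a - 1)) = m / a := by ring
  rw [hsimp, Real.div_rpow hm (le_of_lt ha) (1+β)] at key
  have hapos : (0:ℝ) < a ^ (1+β) := Real.rpow_pos_of_pos ha _
  have key2 : (1 + (1+β) * (m/a-1)) * a^(1+β) ≤ m^(1+β) :=
    calc (1 + (1+β) * (m/a-1)) * a^(1+β) ≤ (m ^ (1+β) / a ^ (1+β)) * a^(1+β) :=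
          mul_le_mul_of_nonneg_right key (le_of_lt hapos)
      _ = m ^ (1+β) := div_mul_cancel₀ _ (ne_of_gt hapos)
  have ha1 : a ^ (1+β) = a ^ β * a := by rw [add_comm, Real.rpow_add_one (ne_of_gt ha)]
  have hu : (m / a) * a = m := div_mul_cancel₀ _ (ne_of_gt ha)
  have e : (1 + (1+β) * (m/a-1)) * (a^β*a) = a^β*a + (1+β)*(m-a)*a^β := by
    field_simp
  rw [ha1, e] at key2
  have hm1 : m ^ (1+β) = m ^ β * m := by rw [add_comm, Real.rpow_add_one (ne_of_gt hm0)]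
  rw [hm1] at key2
  have ga : a ^ (β+1) = a ^ β * a := Real.rpow_add_one (ne_of_gt ha) β
  have gm : m ^ (β+1) = m ^ β * m := Real.rpow_add_one (ne_of_gt hm0) β
  rw [ga, gm]
  linarith

lemma scalar2 {β m a : ℝ} (hβ : 0 ≤ β) (hm : 0 ≤ m) (hma : m ≤ a) :
    (a ^ β - m ^ β) * m ≤ β * a ^ β * (a - m) := by
  rcases eq_or_lt_of_le (hm.trans hma) with ha | ha
  · subst ha
    have hm0 : m = 0 := le_antisymm hma hm
    simp [hm0]
  rcases eq_or_lt_of_le hm with hm0 | hm0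
  · rw [← hm0]; simp; positivity
  have h := bern_rpow hβ hm hma
  rw [Real.rpow_add_one (ne_of_gt ha), Real.rpow_add_one (ne_of_gt hm0)] at h
  linarith

open scoped RealInnerProductSpace

variable {E : Type*} [NormedAddCommGroup E] [InnerProductSpace ℝ E]

lemma norm_phi {β : ℝ} (hβ : 0 ≤ β) (x : E) : ‖(‖x‖ ^ β) • x‖ = ‖x‖ ^ (β + 1) := by
  rcases eq_or_ne x 0 with rfl | hx
  · simp [Real.zero_rpow (by positivity : β + 1 ≠ 0)]
  have hx0 : ‖x‖ ≠ 0 := norm_ne_zero_iff.mpr hx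
  rw [norm_smul, Real.norm_eq_abs, abs_of_nonneg (Real.rpow_nonneg (norm_nonneg x) β),
    Real.rpow_add_one hx0]

lemma phi_upper_aux {β : ℝ} (hβ : 0 ≤ β) (x y : E) (h : ‖y‖ ≤ ‖x‖) :
    ‖(‖x‖ ^ β) • x - (‖y‖ ^ β) • y‖ ≤ (1 + β) * ‖x‖ ^ β * ‖x - y‖ := by
  have key : (‖x‖ ^ β) • x - (‖y‖ ^ β) • y
      = (‖x‖ ^ β) • (x - y) + (‖x‖ ^ β - ‖y‖ ^ β) • y := by
    rw [smul_sub, sub_smul]; abel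
  have hQP : ‖y‖ ^ β ≤ ‖x‖ ^ β := Real.rpow_le_rpow (norm_nonneg y) h hβ
  have hP : (0:ℝ) ≤ ‖x‖ ^ β := Real.rpow_nonneg (norm_nonneg x) β
  have h2 : (‖x‖ ^ β - ‖y‖ ^ β) * ‖y‖ ≤ β * ‖x‖ ^ β * (‖x‖ - ‖y‖) :=
    scalar2 hβ (norm_nonneg y) h
  have h3 : ‖x‖ - ‖y‖ ≤ ‖x - y‖ := norm_sub_norm_le x y
  calc ‖(‖x‖ ^ β) • x - (‖y‖ ^ β) • y‖
      ≤ ‖(‖x‖ ^ β) • (x - y)‖ + ‖(‖x‖ ^ β - ‖y‖ ^ β) • y‖ := by rw [key]; exact norm_add_le _ _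
    _ = (‖x‖ ^ β) * ‖x - y‖ + (‖x‖ ^ β - ‖y‖ ^ β) * ‖y‖ := by
        rw [norm_smul, norm_smul, Real.norm_eq_abs, Real.norm_eq_abs,
          abs_of_nonneg hP, abs_of_nonneg (by linarith)]
    _ ≤ (1 + β) * ‖x‖ ^ β * ‖x - y‖ := by
        nlinarith [h2, mul_le_mul_of_nonneg_left h3 (mul_nonneg hβ hP)]

lemma phi_upper {β : ℝ} (hβ : 0 ≤ β) (x y : E) :
    ‖(‖x‖ ^ β) • x - (‖y‖ ^ β) • y‖ ≤ (1 + β) * (max ‖x‖ ‖y‖) ^ β * ‖x - y‖ := by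
  rcases le_total ‖y‖ ‖x‖ with h | h
  · rw [max_eq_left h]; exact phi_upper_aux hβ x y h
  · rw [max_eq_right h, norm_sub_rev, norm_sub_rev x y]
    exact phi_upper_aux hβ y x h

lemma phi_lower_aux {β : ℝ} (hβ : 0 ≤ β) (x y : E) (h : ‖y‖ ≤ ‖x‖) :
    ‖y‖ ^ β * ‖x - y‖ ≤ ‖(‖x‖ ^ β) • x - (‖y‖ ^ β) • y‖ := by
  set a := ‖x‖
  set m := ‖y‖
  set P := a ^ β with hPdef
  set Q := m ^ β with hQdef
  have hQP : Q ≤ P := Real.rpow_le_rpow (norm_nonneg y) h hβ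
  have hQ : (0:ℝ) ≤ Q := Real.rpow_nonneg (norm_nonneg y) β
  have hP : (0:ℝ) ≤ P := Real.rpow_nonneg (norm_nonneg x) β
  have ht : ⟪x, y⟫ ≤ a * m := real_inner_le_norm x y
  have hm : (0:ℝ) ≤ m := norm_nonneg y
  have hB : ‖P • x - Q • y‖ ^ 2 = P^2 * a^2 - 2 * (P * Q * ⟪x, y⟫) + Q^2 * m^2 := by
    rw [norm_sub_sq_real, real_inner_smul_left, real_inner_smul_right,
      norm_smul, norm_smul, Real.norm_eq_abs, Real.norm_eq_abs,
      abs_of_nonneg hP, abs_of_nonneg hQ]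
    ring
  have hA : (Q * ‖x - y‖) ^ 2 = Q^2 * (a^2 - 2*⟪x,y⟫ + m^2) := by
    rw [mul_pow, norm_sub_sq_real]; try ring
  have hsq : (Q * ‖x - y‖) ^ 2 ≤ ‖P • x - Q • y‖ ^ 2 := by
    rw [hA, hB]
    nlinarith [mul_nonneg (mul_nonneg hQ (sub_nonneg.2 hQP)) (sub_nonneg.2 ht),
      mul_nonneg (mul_nonneg (mul_nonneg hQ (sub_nonneg.2 hQP)) (norm_nonneg x)) (sub_nonneg.2 h),
      mul_nonneg (sub_nonneg.2 hQP) (sub_nonneg.2 hQP), sq_nonneg (a - m), norm_nonneg x]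
  have h1 : (0:ℝ) ≤ Q * ‖x - y‖ := mul_nonneg hQ (norm_nonneg _)
  have h2 : (0:ℝ) ≤ ‖P • x - Q • y‖ := norm_nonneg _
  nlinarith [hsq]

lemma phi_lower {β : ℝ} (hβ : 0 ≤ β) (x y : E) :
    (min ‖x‖ ‖y‖) ^ β * ‖x - y‖ ≤ ‖(‖x‖ ^ β) • x - (‖y‖ ^ β) • y‖ := by
  rcases le_total ‖y‖ ‖x‖ with h | h
  · rw [min_eq_right h]; exact phi_lower_aux hβ x y h
  · rw [min_eq_left h, norm_sub_rev (‖x‖ ^ β • x), norm_sub_rev x y]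
    exact phi_lower_aux hβ y x h

lemma gap_aux {β c m a : ℝ} (hβ : 0 ≤ β) (hm : 1 ≤ m) (hma : m ≤ a)
    (h : a ^ (β+1) - m ^ (β+1) ≤ c * a ^ β) : a ≤ m + c := by
  have ha : (0:ℝ) < a := lt_of_lt_of_le (by linarith) hma
  have hm0 : (0:ℝ) < m := by linarith
  have hP : (0:ℝ) < a ^ β := Real.rpow_pos_of_pos ha β
  rw [Real.rpow_add_one (ne_of_gt ha), Real.rpow_add_one (ne_of_gt hm0)] at h
  have hQP : m ^ β ≤ a ^ β := Real.rpow_le_rpow (by linarith) hma hβ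
  have h2 : a ^ β * a ≤ a ^ β * (m + c) := by nlinarith
  exact (mul_le_mul_iff_right₀ hP).mp h2

lemma gap {β c nl nk : ℝ} (hβ : 0 ≤ β) (h1 : 1 ≤ nl) (h2 : 1 ≤ nk)
    (h : |nl ^ (β+1) - nk ^ (β+1)| ≤ c * (max nl nk) ^ β) :
    max nl nk ≤ min nl nk + c := by
  rcases abs_le.mp h with ⟨hlo, hhi⟩
  rcases le_total nl nk with hlk | hlk
  · rw [max_eq_right hlk] at hlo ⊢
    rw [min_eq_left hlk]
    exact gap_aux hβ h1 hlk (by linarith)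
  · rw [max_eq_left hlk] at hhi ⊢
    rw [min_eq_right hlk]
    exact gap_aux hβ h2 hlk (by linarith)
section helpers

lemma intVec_apply {d : ℕ} (k : Fin d → ℤ) (i : Fin d) : intVec k i = (k i : ℝ) := rfl

lemma intVec_sub {d : ℕ} (k l : Fin d → ℤ) : intVec k - intVec l = intVec (k - l) := by
  ext i; simp [intVec]

lemma one_le_norm_intVec {d : ℕ} {k : Fin d → ℤ} (hk : k ≠ 0) : 1 ≤ ‖intVec k‖ := by
  obtain ⟨i, hi⟩ : ∃ i, k i ≠ 0 := by
    by_contra h; push_neg at h; exact hk (funext h)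
  calc (1:ℝ) ≤ |(k i : ℝ)| := by
        rw [← Int.cast_abs]; exact_mod_cast Int.one_le_abs hi
    _ = |intVec k i| := rfl
    _ ≤ ‖intVec k‖ := coord_le_norm _ _

end helpers

set_option maxHeartbeats 1000000 in
/-- For `d ≥ 1` and `α ∈ [0,1)`, there is `r₀ > 0` such that for every
`r ≥ r₀` the family `(B_k^r)_{k ∈ ℤ^d∖{0}}` is an admissible covering of `ℝ^d`: it covers `ℝ^d`
and has uniformly bounded overlap. -/
theorem alpha_covering_admissible
    {d : ℕ} (hd : 1 ≤ d) (α : ℝ) (hα0 : 0 ≤ α) (hα1 : α < 1) :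
    ∃ r₀ : ℝ, 0 < r₀ ∧ ∀ r : ℝ, r₀ ≤ r →
      (⋃ k ∈ {k : Fin d → ℤ | k ≠ 0}, alphaBall d α r k) = Set.univ ∧
      ∃ N : ℕ, ∀ k : Fin d → ℤ, k ≠ 0 →
        {l : Fin d → ℤ | l ≠ 0 ∧ (alphaBall d α r l ∩ alphaBall d α r k).Nonempty}.Finite ∧
        {l : Fin d → ℤ | l ≠ 0 ∧ (alphaBall d α r l ∩ alphaBall d α r k).Nonempty}.ncard ≤ N := by
  set β := α / (1 - α) with hβdef
  have h1α : (0:ℝ) < 1 - α := by linarith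
  have hβ : 0 ≤ β := div_nonneg hα0 (le_of_lt h1α)
  have hprod : (1 - α) * (1 + β) = 1 := by rw [hβdef]; field_simp; ring
  have hprod2 : (1 - α) * β = α := by rw [hβdef]; field_simp
  set C : ℝ := Real.sqrt d * (1/2) with hC
  have hC0 : 0 ≤ C := by rw [hC]; positivity
  set A : ℝ := (1 + β) * (1 + C) ^ β * C with hA
  have hA0 : 0 ≤ A := by
    rw [hA]
    have h' : (0:ℝ) ≤ (1 + C) ^ β := Real.rpow_nonneg (by linarith) β
    exact mul_nonneg (mul_nonneg (by linarith) h') hC0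
  have hCp : (0:ℝ) ≤ C ^ (1+β) := Real.rpow_nonneg hC0 _
  refine ⟨A + C ^ (1+β) + 2, by linarith, ?_⟩
  intro r hr
  have hr2 : (0:ℝ) < r := by linarith
  constructor
  · -- covering
    apply Set.eq_univ_of_forall
    intro ξ
    set x : EuclideanSpace ℝ (Fin d) := (‖ξ‖ ^ (-α)) • ξ with hx
    set k : Fin d → ℤ := fun i => round (x i) with hk
    have hround : ∀ i, |x i - (k i : ℝ)| ≤ 1/2 := fun i => abs_sub_round (x i)
    have hxk : ‖x - intVec k‖ ≤ C := by
      rw [hC]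
      exact norm_le_of_coord _ _ (by norm_num) (fun i => hround i)
    have hnx : ‖x‖ = ‖ξ‖ ^ (1 - α) := by
      rcases eq_or_ne ξ 0 with rfl | hξ
      · rw [hx]; simp [Real.zero_rpow h1α.ne']
      · have hn : (0:ℝ) < ‖ξ‖ := norm_pos_iff.mpr hξ
        rw [hx, norm_smul, Real.norm_eq_abs,
          abs_of_nonneg (Real.rpow_nonneg (norm_nonneg ξ) _),
          ← Real.rpow_add_one (ne_of_gt hn) (-α)]
        ring_nf
    by_cases hk0 : k = 0
    · -- ξ is small; use the first standard basis vector
      have hiv0 : intVec k = 0 := by rw [hk0]; ext i; simp [intVec]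
      have hxsmall : ‖x‖ ≤ C := by
        have := hxk; rw [hiv0, sub_zero] at this; exact this
      have hξsmall : ‖ξ‖ ≤ C ^ (1+β) := by
        have h1 : ‖ξ‖ ^ ((1-α)*(1+β)) ≤ C ^ (1+β) := by
          rw [Real.rpow_mul (norm_nonneg ξ)]
          exact Real.rpow_le_rpow (Real.rpow_nonneg (norm_nonneg ξ) _)
            (by rw [← hnx]; exact hxsmall) (by linarith)
        rwa [hprod, Real.rpow_one] at h1
      set i₀ : Fin d := ⟨0, hd⟩
      set k' : Fin d → ℤ := fun i => if i = i₀ then 1 else 0 with hk'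
      have hk'0 : k' ≠ 0 := by
        intro h
        have := congrFun h i₀
        simp [hk'] at this
      have hiv : intVec k' = EuclideanSpace.single i₀ (1:ℝ) := by
        ext i
        rw [intVec_apply, EuclideanSpace.single_apply, hk']
        split <;> simp_all
      have hnk' : ‖intVec k'‖ = 1 := by rw [hiv, EuclideanSpace.norm_single]; norm_num
      refine Set.mem_biUnion (show k' ∈ {k : Fin d → ℤ | k ≠ 0} from hk'0) ?_
      rw [alphaBall, Metric.mem_ball, dist_eq_norm, ← hβdef, hnk', Real.one_rpow, one_smul, mul_one]
      calc ‖ξ - intVec k'‖ ≤ ‖ξ‖ + ‖intVec k'‖ := norm_sub_le _ _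
        _ = ‖ξ‖ + 1 := by rw [hnk']
        _ ≤ C ^ (1+β) + 1 := by linarith
        _ < r := by linarith
    · -- main case
      have hxne : x ≠ 0 := by
        intro h
        apply hk0
        funext i
        have : x i = 0 := by rw [h]; rfl
        simp [hk, this]
      have hξne : ξ ≠ 0 := by
        intro h
        apply hxne
        rw [hx, h]; simp
      have hn : (0:ℝ) < ‖ξ‖ := norm_pos_iff.mpr hξne
      have hφx : (‖x‖ ^ β) • x = ξ := by
        rw [hnx, ← Real.rpow_mul (norm_nonneg ξ), hprod2, hx, smul_smul,
          ← Real.rpow_add hn, add_neg_cancel, Real.rpow_zero, one_smul]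
      have hnk1 : 1 ≤ ‖intVec k‖ := one_le_norm_intVec hk0
      have hxn : ‖x‖ ≤ ‖intVec k‖ + C := by
        calc ‖x‖ = ‖(x - intVec k) + intVec k‖ := by rw [sub_add_cancel]
          _ ≤ ‖x - intVec k‖ + ‖intVec k‖ := norm_add_le _ _
          _ ≤ ‖intVec k‖ + C := by linarith
      have hmax : max ‖x‖ ‖intVec k‖ ≤ (1 + C) * ‖intVec k‖ := by
        apply max_le
        · nlinarith
        · nlinarith
      have hnkβ : 1 ≤ ‖intVec k‖ ^ β := by
        have := Real.rpow_le_rpow zero_le_one hnk1 hβ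
        rwa [Real.one_rpow] at this
      have hub : ‖ξ - (‖intVec k‖ ^ β) • intVec k‖ ≤ A * ‖intVec k‖ ^ β := by
        calc ‖ξ - (‖intVec k‖ ^ β) • intVec k‖
            = ‖(‖x‖ ^ β) • x - (‖intVec k‖ ^ β) • intVec k‖ := by rw [hφx]
          _ ≤ (1 + β) * (max ‖x‖ ‖intVec k‖) ^ β * ‖x - intVec k‖ := phi_upper hβ _ _
          _ ≤ (1 + β) * ((1 + C) * ‖intVec k‖) ^ β * C := by
              have hfac : (max ‖x‖ ‖intVec k‖) ^ β ≤ ((1 + C) * ‖intVec k‖) ^ β :=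
                Real.rpow_le_rpow (le_max_of_le_right (norm_nonneg _)) hmax hβ
              have hx1 : (0:ℝ) ≤ (1 + β) * (max ‖x‖ ‖intVec k‖) ^ β :=
                mul_nonneg (by linarith)
                  (Real.rpow_nonneg (le_max_of_le_right (norm_nonneg _)) β)
              have h2 : (1 + β) * (max ‖x‖ ‖intVec k‖) ^ β
                  ≤ (1 + β) * ((1 + C) * ‖intVec k‖) ^ β :=
                mul_le_mul_of_nonneg_left hfac (by linarith)
              nlinarith [hxk, norm_nonneg (x - intVec k)]
          _ = A * ‖intVec k‖ ^ β := by
              rw [Real.mul_rpow (by linarith) (norm_nonneg _), hA]; ring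
      refine Set.mem_biUnion (show k ∈ {k : Fin d → ℤ | k ≠ 0} from hk0) ?_
      rw [alphaBall, Metric.mem_ball, dist_eq_norm, ← hβdef]
      calc ‖ξ - (‖intVec k‖ ^ β) • intVec k‖ ≤ A * ‖intVec k‖ ^ β := hub
        _ < r * ‖intVec k‖ ^ β := by nlinarith
  · -- bounded overlap
    set M : ℤ := ⌈2*r*(1+2*r) ^ β⌉ with hM
    refine ⟨((2*M+1).toNat)^d, ?_⟩
    intro k hk0
    set R : ℝ := 2*r*(1+2*r) ^ β with hR
    have hRnn : 0 ≤ R := by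
      rw [hR]
      have : (0:ℝ) ≤ (1+2*r) ^ β := Real.rpow_nonneg (by linarith) β
      nlinarith
    have hsub : {l : Fin d → ℤ | l ≠ 0 ∧ (alphaBall d α r l ∩ alphaBall d α r k).Nonempty} ⊆
        ↑(Fintype.piFinset fun i => Finset.Icc (k i - M) (k i + M)) := by
      rintro l ⟨hl0, ξ, hξl, hξk⟩
      have hnl1 : 1 ≤ ‖intVec l‖ := one_le_norm_intVec hl0
      have hnk1 : 1 ≤ ‖intVec k‖ := one_le_norm_intVec hk0
      have hdl : ‖ξ - (‖intVec l‖ ^ β) • intVec l‖ < r * ‖intVec l‖ ^ β := by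
        have := hξl
        rw [alphaBall, Metric.mem_ball, dist_eq_norm, ← hβdef] at this
        exact this
      have hdk : ‖ξ - (‖intVec k‖ ^ β) • intVec k‖ < r * ‖intVec k‖ ^ β := by
        have := hξk
        rw [alphaBall, Metric.mem_ball, dist_eq_norm, ← hβdef] at this
        exact this
      have htri : ‖(‖intVec l‖ ^ β) • intVec l - (‖intVec k‖ ^ β) • intVec k‖
          ≤ r * ‖intVec l‖ ^ β + r * ‖intVec k‖ ^ β := by
        have heq : (‖intVec l‖ ^ β) • intVec l - (‖intVec k‖ ^ β) • intVec k
            = -(ξ - (‖intVec l‖ ^ β) • intVec l) + (ξ - (‖intVec k‖ ^ β) • intVec k) := by abel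
        rw [heq]
        calc ‖_ + _‖ ≤ ‖-(ξ - (‖intVec l‖ ^ β) • intVec l)‖
              + ‖ξ - (‖intVec k‖ ^ β) • intVec k‖ := norm_add_le _ _
          _ ≤ r * ‖intVec l‖ ^ β + r * ‖intVec k‖ ^ β := by
              rw [norm_neg]; linarith
      have hmaxb : r * ‖intVec l‖ ^ β + r * ‖intVec k‖ ^ β
          ≤ 2*r * (max ‖intVec l‖ ‖intVec k‖) ^ β := by
        have l1 : ‖intVec l‖ ^ β ≤ (max ‖intVec l‖ ‖intVec k‖) ^ β :=
          Real.rpow_le_rpow (norm_nonneg _) (le_max_left _ _) hβ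
        have l2 : ‖intVec k‖ ^ β ≤ (max ‖intVec l‖ ‖intVec k‖) ^ β :=
          Real.rpow_le_rpow (norm_nonneg _) (le_max_right _ _) hβ
        nlinarith
      have habs : |‖intVec l‖ ^ (β+1) - ‖intVec k‖ ^ (β+1)|
          ≤ 2*r * (max ‖intVec l‖ ‖intVec k‖) ^ β := by
        rw [← norm_phi hβ (intVec l), ← norm_phi hβ (intVec k)]
        exact le_trans (abs_norm_sub_norm_le _ _) (le_trans htri hmaxb)
      have hgap := gap hβ hnl1 hnk1 habs
      have hmin1 : 1 ≤ min ‖intVec l‖ ‖intVec k‖ := le_min hnl1 hnk1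
      have hminb : (max ‖intVec l‖ ‖intVec k‖) ^ β
          ≤ (1+2*r) ^ β * (min ‖intVec l‖ ‖intVec k‖) ^ β := by
        have hmm : max ‖intVec l‖ ‖intVec k‖ ≤ (1+2*r) * min ‖intVec l‖ ‖intVec k‖ := by
          nlinarith
        calc (max ‖intVec l‖ ‖intVec k‖) ^ β
            ≤ ((1+2*r) * min ‖intVec l‖ ‖intVec k‖) ^ β :=
              Real.rpow_le_rpow (le_max_of_le_right (norm_nonneg _)) hmm hβ
          _ = (1+2*r) ^ β * (min ‖intVec l‖ ‖intVec k‖) ^ β :=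
              Real.mul_rpow (by linarith) (by linarith)
      have hminpow : (0:ℝ) < (min ‖intVec l‖ ‖intVec k‖) ^ β :=
        Real.rpow_pos_of_pos (by linarith) β
      have hlow := phi_lower hβ (intVec l) (intVec k)
      have hkey : ‖intVec l - intVec k‖ ≤ R := by
        have hchain : (min ‖intVec l‖ ‖intVec k‖) ^ β * ‖intVec l - intVec k‖
            ≤ (min ‖intVec l‖ ‖intVec k‖) ^ β * R := by
          calc (min ‖intVec l‖ ‖intVec k‖) ^ β * ‖intVec l - intVec k‖
              ≤ ‖(‖intVec l‖ ^ β) • intVec l - (‖intVec k‖ ^ β) • intVec k‖ := hlow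
            _ ≤ 2*r * (max ‖intVec l‖ ‖intVec k‖) ^ β := le_trans htri hmaxb
            _ ≤ 2*r * ((1+2*r) ^ β * (min ‖intVec l‖ ‖intVec k‖) ^ β) := by nlinarith
            _ = (min ‖intVec l‖ ‖intVec k‖) ^ β * R := by rw [hR]; ring
        exact le_of_mul_le_mul_left hchain hminpow
      simp only [Finset.coe_sort_coe, Finset.mem_coe, Fintype.mem_piFinset, Finset.mem_Icc]
      intro i
      have hci : |(l i : ℝ) - (k i : ℝ)| ≤ R := by
        have h1 := coord_le_norm (intVec l - intVec k) i
        have h2 : (intVec l - intVec k) i = (l i : ℝ) - (k i : ℝ) := rfl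
        rw [h2] at h1
        linarith
      have hiM : |l i - k i| ≤ M := by
        have h3 : ((|l i - k i| : ℤ) : ℝ) ≤ (M : ℝ) := by
          push_cast
          calc |(l i : ℝ) - (k i : ℝ)| ≤ R := hci
            _ ≤ (M : ℝ) := by rw [hM]; exact_mod_cast Int.le_ceil R
        exact_mod_cast h3
      rw [abs_le] at hiM
      omega
    have hfin : {l : Fin d → ℤ | l ≠ 0 ∧
        (alphaBall d α r l ∩ alphaBall d α r k).Nonempty}.Finite :=
      Set.Finite.subset (Finset.finite_toSet _) hsub
    refine ⟨hfin, ?_⟩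
    calc {l : Fin d → ℤ | l ≠ 0 ∧ (alphaBall d α r l ∩ alphaBall d α r k).Nonempty}.ncard
        ≤ ((Fintype.piFinset fun i => Finset.Icc (k i - M) (k i + M)) : Set (Fin d → ℤ)).ncard :=
          Set.ncard_le_ncard hsub (Finset.finite_toSet _)
      _ = (Fintype.piFinset fun i => Finset.Icc (k i - M) (k i + M)).card :=
          Set.ncard_coe_finset _
      _ = ((2*M+1).toNat)^d := by
          rw [Fintype.card_piFinset]
          have hcard : ∀ i : Fin d, (Finset.Icc (k i - M) (k i + M)).card = (2*M+1).toNat := by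
            intro i
            rw [Int.card_Icc]
            congr 1
            ring
          simp only [hcard]
          simp [Finset.prod_const, Finset.card_univ]
end

section
/- Let d ≥ 1, α ∈ [0,1) and r > 0. Then there is a constant C ≥ 1 (depending only on d, α, r) such that for every k ∈ ℤ^d∖{0} and every ξ ∈ B_k^r, one has C^{−1}·(1 + |ξ|)^α ≤ (λ(B_k^r))^{1/d} ≤ C·(1 + |ξ|)^α, where λ denotes d-dimensional Lebesgue measure; that is, (B_k^r)_{k∈ℤ^d∖{0}} satisfies the defining size condition of an α-covering. -/
open MeasureTheory
open scoped ENNReal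

set_option maxHeartbeats 1000000

/-- For `d ≥ 1`, `α ∈ [0,1)` and `r > 0`, there is a constant `C ≥ 1`
(depending only on `d, α, r`) such that for every `k ∈ ℤ^d∖{0}` and every `ξ ∈ B_k^r`,
`C⁻¹ (1 + |ξ|)^α ≤ λ(B_k^r)^{1/d} ≤ C (1 + |ξ|)^α`, where `λ` is `d`-dimensional Lebesgue
measure; i.e., `(B_k^r)_k` satisfies the size condition defining an `α`-covering. -/
theorem alpha_covering_size_condition
    {d : ℕ} (hd : 1 ≤ d) (α : ℝ) (hα0 : 0 ≤ α) (hα1 : α < 1) (r : ℝ) (hr : 0 < r) :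
    ∃ C : ℝ, 1 ≤ C ∧ ∀ k : Fin d → ℤ, k ≠ 0 → ∀ ξ ∈ alphaBall d α r k,
      C⁻¹ * (1 + ‖ξ‖) ^ α ≤ ((volume (alphaBall d α r k)).toReal) ^ (1 / (d : ℝ)) ∧
      ((volume (alphaBall d α r k)).toReal) ^ (1 / (d : ℝ)) ≤ C * (1 + ‖ξ‖) ^ α := by
  have hd0 : (d : ℝ) ≠ 0 := Nat.cast_ne_zero.mpr (by omega)
  have h1α : (0:ℝ) < 1 - α := by linarith
  set α₀ := α / (1 - α) with hα₀def
  have hα₀ : 0 ≤ α₀ := div_nonneg hα0 h1α.le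
  have hkey : (α₀ + 1) * α = α₀ := by
    rw [hα₀def]; field_simp; ring
  haveI : Nonempty (Fin d) := ⟨⟨0, hd⟩⟩
  haveI : Nontrivial (EuclideanSpace ℝ (Fin d)) := inferInstance
  set v0 := (volume (Metric.ball (0 : EuclideanSpace ℝ (Fin d)) 1)).toReal with hv0def
  have hv0 : 0 < v0 := ENNReal.toReal_pos
    (Metric.measure_ball_pos volume _ one_pos).ne' measure_ball_lt_top.ne
  set v := v0 ^ (1 / (d:ℝ)) with hvdef
  have hv : 0 < v := Real.rpow_pos_of_pos hv0 _
  have hrv : 0 < r * v := mul_pos hr hv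
  set M := max 2 (max 1 ((2*r) ^ α₀)) with hMdef
  have hM2 : (2:ℝ) ≤ M := le_max_left _ _
  set C := max 1 (max ((2+r) / (r*v)) (M * (r*v))) with hCdef
  have hC1 : (1:ℝ) ≤ C := le_max_left _ _
  have hC0 : (0:ℝ) < C := lt_of_lt_of_le one_pos hC1
  have hCge : (2+r) / (r*v) ≤ C := le_trans (le_max_left _ _) (le_max_right _ _)
  have hCge2 : M * (r*v) ≤ C := le_trans (le_max_right _ _) (le_max_right _ _)
  refine ⟨C, hC1, ?_⟩
  intro k hk ξ hξ
  -- norm of the lattice point is at least 1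
  have hn : 1 ≤ ‖intVec k‖ := by
    obtain ⟨i, hi⟩ : ∃ i, k i ≠ 0 := by
      by_contra h; push_neg at h; exact hk (funext h)
    have h1 : (1:ℝ) ≤ ‖intVec k i‖ := by
      have : intVec k i = (k i : ℝ) := rfl
      rw [this, Real.norm_eq_abs, ← Int.cast_abs]
      exact_mod_cast Int.one_le_abs hi
    rw [EuclideanSpace.norm_eq]
    have hs : (1:ℝ) ≤ ∑ j, ‖intVec k j‖ ^ 2 := by
      calc (1:ℝ) ≤ ‖intVec k i‖ ^ 2 := by nlinarith
      _ ≤ ∑ j, ‖intVec k j‖ ^ 2 :=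
        Finset.single_le_sum (f := fun j => ‖intVec k j‖ ^ 2)
          (fun j _ => sq_nonneg _) (Finset.mem_univ i)
    calc (1:ℝ) = Real.sqrt 1 := (Real.sqrt_one).symm
    _ ≤ _ := Real.sqrt_le_sqrt hs
  set n := ‖intVec k‖ with hndef
  have hn0 : (0:ℝ) < n := lt_of_lt_of_le one_pos hn
  set t := n ^ α₀ with htdef
  have ht1 : 1 ≤ t := Real.one_le_rpow hn hα₀
  have ht0 : (0:ℝ) < t := lt_of_lt_of_le one_pos ht1
  have hρ0 : (0:ℝ) ≤ r * t := by positivity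
  -- volume computation
  have hvol : ((volume (alphaBall d α r k)).toReal) ^ (1/(d:ℝ)) = (r*t) * v := by
    rw [alphaBall]
    rw [Measure.addHaar_ball volume _ hρ0, finrank_euclideanSpace_fin,
      ENNReal.toReal_mul, ENNReal.toReal_ofReal (by positivity), ← hv0def,
      Real.mul_rpow (by positivity) hv0.le, ← Real.rpow_natCast (r*t) d,
      ← Real.rpow_mul hρ0, mul_one_div_cancel hd0, Real.rpow_one, ← hvdef]
  -- position of ξ
  have hcn : ‖(t • intVec k : EuclideanSpace ℝ (Fin d))‖ = t * n := by
    rw [norm_smul, Real.norm_eq_abs, abs_of_nonneg ht0.le, hndef]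
  have hmem : ‖ξ - t • intVec k‖ < r * t := by
    have := hξ
    rw [alphaBall, Metric.mem_ball, dist_eq_norm] at this
    exact this
  have hup : ‖ξ‖ ≤ t*n + r*t := by
    have h1 := norm_sub_norm_le ξ (t • intVec k)
    rw [hcn] at h1; linarith
  have hlow : t*n - r*t ≤ ‖ξ‖ := by
    have h1 := norm_sub_norm_le (t • intVec k) ξ
    rw [hcn, norm_sub_rev] at h1; linarith
  have hξ0 : (0:ℝ) ≤ 1 + ‖ξ‖ := by positivity
  have hX0 : (0:ℝ) ≤ (1 + ‖ξ‖) ^ α := Real.rpow_nonneg hξ0 α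
  -- key rpow identity
  have htnα : (t * n) ^ α = t := by
    have h1 : t * n = n ^ (α₀ + 1) := by rw [Real.rpow_add hn0, Real.rpow_one]
    rw [h1, ← Real.rpow_mul hn0.le, hkey]
  -- upper bound on (1+‖ξ‖)^α
  have hA : (1 + ‖ξ‖) ^ α ≤ (2 + r) * t := by
    have htn1 : (1:ℝ) ≤ t * n := by nlinarith [ht1, hn]
    have h5 : (0:ℝ) ≤ r*t*(n-1) := mul_nonneg (mul_nonneg hr.le ht0.le) (by linarith)
    have h1 : 1 + ‖ξ‖ ≤ (2 + r) * (t * n) := by nlinarith [h5, htn1, hup]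
    calc (1+‖ξ‖)^α ≤ ((2+r)*(t*n))^α := Real.rpow_le_rpow hξ0 h1 hα0
    _ = (2+r)^α * (t*n)^α := Real.mul_rpow (by linarith) (by positivity)
    _ = (2+r)^α * t := by rw [htnα]
    _ ≤ (2+r) * t := by
        have h2 : (2+r)^α ≤ (2+r)^(1:ℝ) :=
          Real.rpow_le_rpow_of_exponent_le (by linarith) hα1.le
        rw [Real.rpow_one] at h2
        exact mul_le_mul_of_nonneg_right h2 ht0.le
  -- lower bound
  have hB : t ≤ M * (1 + ‖ξ‖) ^ α := by
    rcases le_or_gt (2*r) n with h2r | h2r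
    · have h6 : (0:ℝ) ≤ (n - 2*r)*t := mul_nonneg (by linarith) ht0.le
      have h1 : t * n / 2 ≤ 1 + ‖ξ‖ := by nlinarith [h6, hlow, norm_nonneg ξ]
      have h2 : (t*n/2) ^ α ≤ (1+‖ξ‖)^α := Real.rpow_le_rpow (by positivity) h1 hα0
      have h3 : (t*n/2)^α = t / 2^α := by
        rw [Real.div_rpow (by positivity) (by norm_num), htnα]
      have h4 : (1:ℝ) ≤ (2:ℝ)^α ∧ (2:ℝ)^α ≤ 2 := by
        constructor
        · exact Real.one_le_rpow (by norm_num) hα0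
        · have := Real.rpow_le_rpow_of_exponent_le (by norm_num : (1:ℝ) ≤ 2) hα1.le
          rwa [Real.rpow_one] at this
      have h2pos : (0:ℝ) < 2^α := lt_of_lt_of_le one_pos h4.1
      rw [h3, div_le_iff₀ h2pos] at h2
      calc t ≤ (1+‖ξ‖)^α * 2^α := h2
      _ ≤ (1+‖ξ‖)^α * M := by nlinarith [h4.2, hM2, hX0]
      _ = M * (1+‖ξ‖)^α := mul_comm _ _
    · have ht2 : t ≤ (2*r)^α₀ := Real.rpow_le_rpow hn0.le h2r.le hα₀
      have h1 : (1:ℝ) ≤ (1+‖ξ‖)^α := Real.one_le_rpow (by linarith [norm_nonneg ξ]) hα0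
      have hMr : (2*r)^α₀ ≤ M := le_trans (le_max_right _ _) (le_max_right _ _)
      have hM0 : (0:ℝ) ≤ M := by linarith
      calc t ≤ M := le_trans ht2 hMr
      _ = M * 1 := (mul_one M).symm
      _ ≤ M * (1+‖ξ‖)^α := mul_le_mul_of_nonneg_left h1 hM0
  constructor
  · rw [hvol, inv_mul_le_iff₀ hC0]
    have h4 : 2 + r ≤ C * (r*v) := (div_le_iff₀ hrv).mp hCge
    calc (1+‖ξ‖)^α ≤ (2+r)*t := hA
    _ ≤ (C*(r*v))*t := mul_le_mul_of_nonneg_right h4 ht0.le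
    _ = C * (r*t*v) := by ring
  · rw [hvol]
    calc r*t*v ≤ r * (M * (1+‖ξ‖)^α) * v :=
      mul_le_mul_of_nonneg_right (mul_le_mul_of_nonneg_left hB hr.le) hv.le
    _ = (M*(r*v)) * (1+‖ξ‖)^α := by ring
    _ ≤ C * (1+‖ξ‖)^α := mul_le_mul_of_nonneg_right hCge2 hX0
end

section
/- For every c ∈ ℝ, the shearlet-type set H₃^{(c)} = {ε·[[a, b],[0, a^c]] : a ∈ (0,∞), b ∈ ℝ, ε ∈ {1,−1}} is a closed subgroup of GL(2,ℝ), and it is an admissible dilation group: with ξ₀ = (1,0), the dual orbit {hᵀ ξ₀ : h ∈ H₃^{(c)}} equals (ℝ∖{0}) × ℝ, which is open in ℝ² and whose complement {0}×ℝ is a Lebesgue null set, and the stabilizer {h ∈ H₃^{(c)} : hᵀ ξ₀ = ξ₀} equals {I} and is in particular compact. -/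
open MeasureTheory Matrix

/-- The shearlet-type family `H₃^{(c)} = {ε [[a, b], [0, a^c]] : a > 0, b ∈ ℝ, ε = ±1}`,
as a set of elements of `GL(2,ℝ)`. -/
def shearletTypeSet (c : ℝ) : Set (GL (Fin 2) ℝ) :=
  {h | ∃ (a b ε : ℝ), 0 < a ∧ (ε = 1 ∨ ε = -1) ∧
    (h : Matrix (Fin 2) (Fin 2) ℝ) = ε • !![a, b; 0, a ^ c]}

private lemma shearlet_det_ne_zero (h : GL (Fin 2) ℝ) :
    ((h : Matrix (Fin 2) (Fin 2) ℝ)).det ≠ 0 := by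
  have : IsUnit (h : Matrix (Fin 2) (Fin 2) ℝ) := ⟨h, rfl⟩
  rw [Matrix.isUnit_iff_isUnit_det, isUnit_iff_ne_zero] at this
  exact this

private lemma exp_eq (c : ℝ) : max c 0 + 1 = c + (max (-c) 0 + 1) := by
  rcases le_total c 0 with hc | hc
  · rw [max_eq_right hc, max_eq_left (by linarith)]; ring
  · rw [max_eq_left hc, max_eq_right (by linarith)]; ring

private lemma smul_fin_two (ε a b x d : ℝ) :
    (ε • !![a, b; x, d] : Matrix (Fin 2) (Fin 2) ℝ) = !![ε*a, ε*b; ε*x, ε*d] := by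
  funext i j; fin_cases i <;> fin_cases j <;> simp

private lemma shearlet_mem_iff (c : ℝ) (h : GL (Fin 2) ℝ) :
    h ∈ shearletTypeSet c ↔
      ((h : Matrix (Fin 2) (Fin 2) ℝ) 1 0 = 0 ∧
       0 ≤ (h : Matrix (Fin 2) (Fin 2) ℝ) 0 0 * (h : Matrix (Fin 2) (Fin 2) ℝ) 1 1 ∧
       |(h : Matrix (Fin 2) (Fin 2) ℝ) 1 1| *
          |(h : Matrix (Fin 2) (Fin 2) ℝ) 0 0| ^ (max (-c) 0 + 1)
        = |(h : Matrix (Fin 2) (Fin 2) ℝ) 0 0| ^ (max c 0 + 1)) := by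
  constructor
  · rintro ⟨a, b, ε, ha, hε, hval⟩
    have habs : |ε| = 1 := by rcases hε with rfl | rfl <;> simp
    have h00 : (h : Matrix (Fin 2) (Fin 2) ℝ) 0 0 = ε * a := by rw [hval]; simp
    have h11 : (h : Matrix (Fin 2) (Fin 2) ℝ) 1 1 = ε * (a ^ c) := by rw [hval]; simp
    have h10 : (h : Matrix (Fin 2) (Fin 2) ℝ) 1 0 = 0 := by rw [hval]; simp
    have hε2 : ε * ε = 1 := by rcases hε with rfl | rfl <;> norm_num
    refine ⟨h10, ?_, ?_⟩
    · rw [h00, h11]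
      have : ε * a * (ε * a ^ c) = a * a ^ c := by rw [mul_mul_mul_comm, hε2, one_mul]
      rw [this]
      positivity
    · rw [h00, h11, abs_mul, abs_mul, habs, one_mul, one_mul,
        abs_of_pos ha, abs_of_pos (Real.rpow_pos_of_pos ha c),
        exp_eq c, Real.rpow_add ha c]
  · rintro ⟨h10, hprod, heq⟩
    set M : Matrix (Fin 2) (Fin 2) ℝ := (h : Matrix (Fin 2) (Fin 2) ℝ) with hM
    have hdet : M.det ≠ 0 := shearlet_det_ne_zero h
    rw [Matrix.det_fin_two, h10, mul_zero, sub_zero] at hdet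
    have hprod' : 0 < M 0 0 * M 1 1 := lt_of_le_of_ne hprod (Ne.symm hdet)
    have h00ne : M 0 0 ≠ 0 := fun h0 => by simp [h0] at hprod'
    obtain ⟨ε, hεs, hεa⟩ : ∃ ε : ℝ, (ε = 1 ∨ ε = -1) ∧ ε * M 0 0 = |M 0 0| := by
      rcases lt_or_gt_of_ne h00ne with h' | h'
      · exact ⟨-1, Or.inr rfl, by rw [abs_of_neg h']; ring⟩
      · exact ⟨1, Or.inl rfl, by rw [abs_of_pos h', one_mul]⟩
    have hε2 : ε * ε = 1 := by rcases hεs with rfl | rfl <;> norm_num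
    have ha : 0 < |M 0 0| := abs_pos.mpr h00ne
    refine ⟨|M 0 0|, ε * M 0 1, ε, ha, hεs, ?_⟩
    have hp : 0 < |M 0 0| ^ (max (-c) 0 + 1) := Real.rpow_pos_of_pos ha _
    have habs11 : |M 1 1| = |M 0 0| ^ c := by
      refine mul_right_cancel₀ hp.ne' ?_
      rw [heq, exp_eq c, Real.rpow_add ha]
    have hsame : 0 < ε * M 1 1 := by
      have h1 : 0 < ε * M 0 0 := hεa ▸ ha
      nlinarith
    have h11' : ε * M 1 1 = |M 0 0| ^ c := by
      have habsε : |ε| = 1 := by rcases hεs with rfl | rfl <;> simp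
      rw [← abs_of_pos hsame, abs_mul, habsε, one_mul, habs11]
    have e1 : ε * |M 0 0| = M 0 0 := by rw [← hεa, ← mul_assoc, hε2, one_mul]
    have e2 : ε * (ε * M 0 1) = M 0 1 := by rw [← mul_assoc, hε2, one_mul]
    have e3 : ε * |M 0 0| ^ c = M 1 1 := by rw [← h11', ← mul_assoc, hε2, one_mul]
    rw [smul_fin_two, e1, e2, e3, mul_zero]
    conv_lhs => rw [← hM, Matrix.eta_fin_two M]
    rw [h10]

private lemma shearlet_mulVec (c a b ε : ℝ) :
    ((ε • !![a, b; 0, a ^ c] : Matrix (Fin 2) (Fin 2) ℝ)ᵀ).mulVec ![1, 0] = ![ε * a, ε * b] := by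
  funext i; fin_cases i <;>
    simp [Matrix.mulVec, dotProduct, Fin.sum_univ_two, mul_comm]

private lemma one_mem_shearlet (c : ℝ) : (1 : GL (Fin 2) ℝ) ∈ shearletTypeSet c := by
  refine ⟨1, 0, 1, one_pos, Or.inl rfl, ?_⟩
  rw [Units.val_one, Real.one_rpow, one_smul, Matrix.one_fin_two]

private lemma mul_mem_shearlet (c : ℝ) {g h : GL (Fin 2) ℝ}
    (hg : g ∈ shearletTypeSet c) (hh : h ∈ shearletTypeSet c) :
    g * h ∈ shearletTypeSet c := by
  obtain ⟨a₁, b₁, ε₁, ha₁, hε₁, hv₁⟩ := hg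
  obtain ⟨a₂, b₂, ε₂, ha₂, hε₂, hv₂⟩ := hh
  refine ⟨a₁ * a₂, a₁ * b₂ + b₁ * a₂ ^ c, ε₁ * ε₂, mul_pos ha₁ ha₂, ?_, ?_⟩
  · rcases hε₁ with rfl | rfl <;> rcases hε₂ with rfl | rfl <;> norm_num
  · rw [Units.val_mul, hv₁, hv₂, smul_mul_smul_comm, Matrix.mul_fin_two]
    congr 1
    rw [Real.mul_rpow ha₁.le ha₂.le]
    norm_num

private lemma inv_mem_shearlet (c : ℝ) {h : GL (Fin 2) ℝ}
    (hh : h ∈ shearletTypeSet c) : h⁻¹ ∈ shearletTypeSet c := by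
  obtain ⟨a, b, ε, ha, hεs, hval⟩ := hh
  have hac : (0:ℝ) < a ^ c := Real.rpow_pos_of_pos ha c
  have hε2 : ε * ε = 1 := by rcases hεs with rfl | rfl <;> norm_num
  refine ⟨a⁻¹, -(b * a⁻¹ * (a ^ c)⁻¹), ε, inv_pos.mpr ha, hεs, ?_⟩
  have hmul : (ε • !![a⁻¹, -(b * a⁻¹ * (a ^ c)⁻¹); 0, a⁻¹ ^ c]
        : Matrix (Fin 2) (Fin 2) ℝ) * (h : Matrix (Fin 2) (Fin 2) ℝ) = 1 := by
    rw [hval, smul_mul_smul_comm, hε2, one_smul, Matrix.mul_fin_two,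
      Real.inv_rpow ha.le, Matrix.one_fin_two]
    ext i j; fin_cases i <;> fin_cases j <;> simp <;> field_simp <;> ring
  exact Units.inv_eq_of_mul_eq_one_left hmul ▸ rfl

private lemma shearlet_closed (c : ℝ) : IsClosed (shearletTypeSet c) := by
  have e : ∀ i j, Continuous fun h : GL (Fin 2) ℝ => (h : Matrix (Fin 2) (Fin 2) ℝ) i j :=
    fun i j => Units.continuous_val.matrix_elem i j
  have hset : shearletTypeSet c =
      {h : GL (Fin 2) ℝ | (h : Matrix (Fin 2) (Fin 2) ℝ) 1 0 = 0} ∩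
      ({h : GL (Fin 2) ℝ |
          0 ≤ (h : Matrix (Fin 2) (Fin 2) ℝ) 0 0 * (h : Matrix (Fin 2) (Fin 2) ℝ) 1 1} ∩
       {h : GL (Fin 2) ℝ |
          |(h : Matrix (Fin 2) (Fin 2) ℝ) 1 1| *
            |(h : Matrix (Fin 2) (Fin 2) ℝ) 0 0| ^ (max (-c) 0 + 1)
          = |(h : Matrix (Fin 2) (Fin 2) ℝ) 0 0| ^ (max c 0 + 1)}) := by
    ext h
    rw [shearlet_mem_iff]
    simp [Set.mem_inter_iff, and_assoc]
  rw [hset]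
  refine IsClosed.inter (isClosed_eq (e 1 0) continuous_const)
    (IsClosed.inter (isClosed_le continuous_const ((e 0 0).mul (e 1 1)))
      (isClosed_eq (((e 1 1).abs).mul (((e 0 0).abs).rpow_const
          (fun _ => Or.inr (by positivity))))
        (((e 0 0).abs).rpow_const (fun _ => Or.inr (by positivity)))))

private lemma shearlet_stab (c : ℝ) :
    {h : GL (Fin 2) ℝ | h ∈ shearletTypeSet c ∧
        ((h : Matrix (Fin 2) (Fin 2) ℝ)ᵀ).mulVec ![1, 0] = ![1, 0]}
      = {(1 : GL (Fin 2) ℝ)} := by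
  ext h
  simp only [Set.mem_setOf_eq, Set.mem_singleton_iff]
  constructor
  · rintro ⟨⟨a, b, ε, ha, hεs, hval⟩, hfix⟩
    rw [hval, shearlet_mulVec] at hfix
    have h0 : ε * a = 1 := by
      have := congr_fun hfix 0; simpa using this
    have h1 : ε * b = 0 := by
      have := congr_fun hfix 1; simpa using this
    rcases hεs with rfl | rfl
    · rw [one_mul] at h0 h1
      subst h0
      rw [h1] at hval
      ext : 1
      rw [hval, Units.val_one, Real.one_rpow, one_smul, Matrix.one_fin_two]
    · exfalso; rw [neg_one_mul] at h0; linarith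
  · rintro rfl
    refine ⟨one_mem_shearlet c, ?_⟩
    rw [Units.val_one, Matrix.transpose_one, Matrix.one_mulVec]

/-- For every `c ∈ ℝ`, the shearlet-type set `H₃^{(c)}` is a closed subgroup
of `GL(2,ℝ)`, and it is an admissible dilation group: with `ξ₀ = (1,0)`, the dual orbit
`{hᵀ ξ₀ : h ∈ H₃^{(c)}}` equals `(ℝ∖{0}) × ℝ`, which is open with Lebesgue null complement
`{0} × ℝ`, and the stabilizer of `ξ₀` in `H₃^{(c)}` is `{I}`, in particular compact. -/
theorem shearlet_type_group_admissible_dilation_group (c : ℝ) :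
    (∃ S : Subgroup (GL (Fin 2) ℝ),
      (S : Set (GL (Fin 2) ℝ)) = shearletTypeSet c ∧ IsClosed (S : Set (GL (Fin 2) ℝ))) ∧
    ({v : Fin 2 → ℝ | ∃ h ∈ shearletTypeSet c,
        v = ((h : Matrix (Fin 2) (Fin 2) ℝ)ᵀ).mulVec ![1, 0]}
      = {v : Fin 2 → ℝ | v 0 ≠ 0}) ∧
    IsOpen {v : Fin 2 → ℝ | v 0 ≠ 0} ∧
    volume ({v : Fin 2 → ℝ | v 0 ≠ 0}ᶜ) = 0 ∧
    ({h : GL (Fin 2) ℝ | h ∈ shearletTypeSet c ∧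
        ((h : Matrix (Fin 2) (Fin 2) ℝ)ᵀ).mulVec ![1, 0] = ![1, 0]}
      = {(1 : GL (Fin 2) ℝ)}) ∧
    IsCompact {h : GL (Fin 2) ℝ | h ∈ shearletTypeSet c ∧
        ((h : Matrix (Fin 2) (Fin 2) ℝ)ᵀ).mulVec ![1, 0] = ![1, 0]} := by
  refine ⟨⟨{ carrier := shearletTypeSet c,
             mul_mem' := fun hg hh => mul_mem_shearlet c hg hh,
             one_mem' := one_mem_shearlet c,
             inv_mem' := fun hh => inv_mem_shearlet c hh }, rfl, shearlet_closed c⟩,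
    ?_, ?_, ?_, shearlet_stab c, ?_⟩
  · -- orbit
    ext v
    simp only [Set.mem_setOf_eq]
    constructor
    · rintro ⟨h, ⟨a, b, ε, ha, hεs, hval⟩, hv⟩
      rw [hval, shearlet_mulVec] at hv
      have : v 0 = ε * a := by rw [hv]; simp
      rw [this]
      rcases hεs with rfl | rfl
      · simpa using ha.ne'
      · simp only [neg_one_mul, ne_eq, neg_eq_zero]; exact ha.ne'
    · intro hv0
      obtain ⟨ε, hεs, hεa⟩ : ∃ ε : ℝ, (ε = 1 ∨ ε = -1) ∧ ε * |v 0| = v 0 := by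
        rcases lt_or_gt_of_ne hv0 with h' | h'
        · exact ⟨-1, Or.inr rfl, by rw [abs_of_neg h']; ring⟩
        · exact ⟨1, Or.inl rfl, by rw [abs_of_pos h', one_mul]⟩
      have hε2 : ε * ε = 1 := by rcases hεs with rfl | rfl <;> norm_num
      have ha : (0:ℝ) < |v 0| := abs_pos.mpr hv0
      set M0 : Matrix (Fin 2) (Fin 2) ℝ := ε • !![|v 0|, ε * v 1; 0, |v 0| ^ c] with hM0
      have hdet : M0.det ≠ 0 := by
        rw [hM0, smul_fin_two, Matrix.det_fin_two_of]
        have : 0 < ε * |v 0| * (ε * |v 0| ^ c) := by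
          rw [mul_mul_mul_comm, hε2, one_mul]
          positivity
        simp only [mul_zero, sub_zero]
        exact this.ne'
      refine ⟨GeneralLinearGroup.mkOfDetNeZero M0 hdet, ⟨|v 0|, ε * v 1, ε, ha, hεs, rfl⟩, ?_⟩
      show v = (M0ᵀ).mulVec ![1, 0]
      rw [hM0, shearlet_mulVec, hεa]
      funext i; fin_cases i
      · simp
      · show v 1 = ε * (ε * v 1)
        rw [← mul_assoc, hε2, one_mul]
  · exact isOpen_compl_singleton.preimage (continuous_apply 0)
  · have hs : ({v : Fin 2 → ℝ | v 0 ≠ 0}ᶜ : Set (Fin 2 → ℝ)) =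
        (LinearMap.ker (LinearMap.proj 0 : (Fin 2 → ℝ) →ₗ[ℝ] ℝ) : Submodule ℝ (Fin 2 → ℝ)) := by
      ext v; simp
    rw [hs]
    apply Measure.addHaar_submodule
    intro htop
    have : (![1, 0] : Fin 2 → ℝ) ∈
        LinearMap.ker (LinearMap.proj 0 : (Fin 2 → ℝ) →ₗ[ℝ] ℝ) := htop ▸ trivial
    simp at this
  · rw [shearlet_stab c]
    exact isCompact_singleton
end
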